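/- If 0 ≤ ε < r·cos θ, then the complement ℝ³ \ S_ε of the closed ε-neighborhood of the sphere-with-cap-removed is a connected set. -/

import Mathlib

open Metric Set EMetric

private lemma sq_le_aux {a b : ℝ} (hb : 0 ≤ b) (h : a^2 ≤ b^2) (ha : 0 ≤ a) : a ≤ b := by nlinarith

private lemma notin_cthick {α : Type*} [PseudoMetricSpace α] {S : Set α} {q : α} {ε δ : ℝ}
    (hε0 : 0 ≤ ε) (hεδ : ε < δ) (H : ∀ x ∈ S, δ ≤ dist q x) :
    q ∉ Metric.cthickening ε S := by
  intro hq
  rw [Metric.mem_cthickening_iff] at hq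
  have h2 : ENNReal.ofReal δ ≤ EMetric.infEdist q S :=
    le_infEdist.2 fun y hy => by rw [edist_dist]; exact ENNReal.ofReal_le_ofReal (H y hy)
  have := (ENNReal.ofReal_le_ofReal_iff hε0).1 (h2.trans hq)
  linarith


private lemma bound1 {s t m r e' : ℝ} (hs : 0 ≤ s) (htm : t ≤ m) (hm2 : m^2 = r^2 - e'^2) :
    e'^2 ≤ s^2 - 2*(s*t) + r^2 := by
  nlinarith [sq_nonneg (s - m), mul_nonneg hs (sub_nonneg.2 htm)]

private lemma bound2 {s s0 t r e' d D : ℝ} (h1 : 0 ≤ (s - s0)*(s + s0 - 2*t))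
    (hD : d ≤ D) (hed : e' ≤ d) (he0 : 0 ≤ e') (hD2 : D^2 = s0^2 - 2*(s0*t) + r^2) :
    e'^2 ≤ s^2 - 2*(s*t) + r^2 := by
  have hd0 : 0 ≤ d := le_trans he0 hed
  have hD0 : 0 ≤ D := le_trans hd0 hD
  have l1 : e'^2 ≤ d^2 := mul_le_mul hed hed he0 hd0 |>.trans_eq (by ring) |>.trans_eq' (by ring)
  have l2 : d^2 ≤ D^2 := mul_le_mul hD hD hd0 hD0 |>.trans_eq (by ring) |>.trans_eq' (by ring)
  nlinarith [l1, l2]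

private lemma dich_aux {s0 t m r e' D : ℝ} (hms0 : m ≤ s0) (ha : s0 ≤ t) (hb : m ≤ t)
    (hm0 : 0 ≤ m) (hm2 : m^2 = r^2 - e'^2) (hD2 : D^2 = s0^2 - 2*(s0*t) + r^2)
    (heD : e' < D) (he0 : 0 ≤ e') : False := by
  have step1 : (t - s0)^2 ≤ (t - m)^2 := by
    nlinarith [mul_nonneg (sub_nonneg.2 hms0) (show (0:ℝ) ≤ 2*t - m - s0 by linarith)]
  have step2 : (t - m)^2 ≤ (t - m)*(t + m) := by
    nlinarith [mul_nonneg (sub_nonneg.2 hb) hm0]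
  have hkey : D^2 ≤ e'^2 := by nlinarith [step1, step2]
  nlinarith [hkey, heD, he0]

set_option maxHeartbeats 1000000 in
theorem sphere_with_cap_removed_complement_connected_before_birth
    (r θ ε : ℝ) (hr : 0 < r) (hθ : θ ∈ Set.Ioo 0 (Real.pi / 2))
    (S : Set (EuclideanSpace ℝ (Fin 3)))
    (hS : S = {p : EuclideanSpace ℝ (Fin 3) | ‖p‖ = r ∧ p 2 ≤ r * Real.sin θ})
    (hε0 : 0 ≤ ε) (hε : ε < r * Real.cos θ) :
    IsConnected (Metric.cthickening ε S)ᶜ := by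
  obtain ⟨hθ0, hθπ⟩ := hθ
  have hπ : 0 < Real.pi := Real.pi_pos
  have hcos : 0 < Real.cos θ := Real.cos_pos_of_mem_Ioo ⟨by linarith, hθπ⟩
  have hsin : 0 < Real.sin θ := Real.sin_pos_of_pos_of_lt_pi hθ0 (by linarith)
  have hcos1 : Real.cos θ ≤ 1 := Real.cos_le_one θ
  have hsin1 : Real.sin θ ≤ 1 := Real.sin_le_one θ
  have hεr : ε < r := lt_of_lt_of_le hε (by nlinarith)
  have hrε : 0 < r - ε := by linarith
  -- basic vector `e`
  set e : EuclideanSpace ℝ (Fin 3) := EuclideanSpace.single (2 : Fin 3) (1:ℝ) with he_def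
  have he : ‖e‖ = 1 := by simp [he_def, EuclideanSpace.norm_single]
  have hinner_e : ∀ (h : ℝ) (x : EuclideanSpace ℝ (Fin 3)),
      (inner ℝ (h • e) x : ℝ) = h * x 2 := by
    intro h x
    rw [real_inner_smul_left, he_def, EuclideanSpace.inner_single_left]
    simp
  -- norms squared
  have dist_sq : ∀ q x : EuclideanSpace ℝ (Fin 3), x ∈ S →
      dist q x ^ 2 = ‖q‖^2 - 2 * (inner ℝ q x : ℝ) + r^2 := by
    intro q x hx
    rw [hS] at hx
    rw [dist_eq_norm, norm_sub_sq_real, hx.1]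
  have hSnorm : ∀ x ∈ S, ‖x‖ = r := by intro x hx; rw [hS] at hx; exact hx.1
  have hScoord : ∀ x ∈ S, x 2 ≤ r * Real.sin θ := by intro x hx; rw [hS] at hx; exact hx.2
  -- S is nonempty
  have hSne : S.Nonempty := by
    refine ⟨(-r) • e, ?_⟩
    rw [hS]
    constructor
    · rw [norm_smul, he]; simp [abs_of_pos hr]
    · have : ((-r) • e) 2 = -r := by simp [he_def, EuclideanSpace.single_apply]
      rw [this]; nlinarith
  -- dist from x ∈ S to any point: lower bound by norms
  have dist_ge_norm : ∀ (q : EuclideanSpace ℝ (Fin 3)), ∀ x ∈ S, ‖x‖ - ‖q‖ ≤ dist q x ∧ ‖q‖ - ‖x‖ ≤ dist q x := by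
    intro q x hx
    constructor
    · rw [dist_eq_norm, norm_sub_rev]; exact (norm_sub_norm_le x q)
    · rw [dist_eq_norm]; exact (norm_sub_norm_le q x)
  set R : ℝ := r + ε + 1 with hR_def
  have hR0 : 0 ≤ R := by linarith
  -- the core set K
  set Kball := Metric.ball (0 : EuclideanSpace ℝ (Fin 3)) (r - ε) with hKb
  set Kaxis := (fun h : ℝ => h • e) '' Ici (0:ℝ) with hKa
  set Ksph := Metric.sphere (0 : EuclideanSpace ℝ (Fin 3)) R with hKs
  set K := Kball ∪ (Kaxis ∪ Ksph) with hK_def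
  have h0ball : (0 : EuclideanSpace ℝ (Fin 3)) ∈ Kball := mem_ball_self hrε
  have h0axis : (0 : EuclideanSpace ℝ (Fin 3)) ∈ Kaxis := ⟨0, mem_Ici.2 (le_refl 0), zero_smul ℝ e⟩
  have hReaxis : R • e ∈ Kaxis := ⟨R, mem_Ici.2 hR0, rfl⟩
  have hnormsmul : ∀ s : ℝ, 0 ≤ s → ‖s • e‖ = s := by
    intro s hs; rw [norm_smul, he, mul_one, Real.norm_eq_abs, abs_of_nonneg hs]
  have hResph : R • e ∈ Ksph := by
    rw [hKs, mem_sphere, dist_zero_right, hnormsmul R hR0]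
  -- preconnectedness of pieces
  have pb : IsPreconnected Kball := (convex_ball (0 : EuclideanSpace ℝ (Fin 3)) (r-ε)).isPreconnected
  have pa : IsPreconnected Kaxis :=
    isPreconnected_Ici.image _ ((continuous_id.smul continuous_const).continuousOn)
  have hrank : (1:Cardinal) < Module.rank ℝ (EuclideanSpace ℝ (Fin 3)) := by
    have h := Module.finrank_eq_rank ℝ (EuclideanSpace ℝ (Fin 3))
    rw [finrank_euclideanSpace_fin] at h
    rw [← h]; norm_num
  have ps : IsPreconnected Ksph := (isConnected_sphere hrank 0 hR0).isPreconnected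
  have pK : IsPreconnected K :=
    IsPreconnected.union 0 h0ball (Or.inl h0axis) pb
      (IsPreconnected.union (R • e) hReaxis hResph pa ps)
  -- K is inside the complement
  have hK : K ⊆ (Metric.cthickening ε S)ᶜ := by
    rintro q (hq | hq | hq)
    · -- ball
      rw [hKb, mem_ball_zero_iff] at hq
      exact notin_cthick hε0 (by linarith : ε < r - ‖q‖)
        (fun x hx => by have := (dist_ge_norm q x hx).1; rw [hSnorm x hx] at this; linarith)
    · -- axis
      obtain ⟨h, hh0, rfl⟩ := hq
      replace hh0 : (0:ℝ) ≤ h := mem_Ici.1 hh0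
      refine notin_cthick hε0 hε (fun x hx => ?_)
      have hd2 : dist (h • e) x ^ 2 = h^2 - 2 * (h * x 2) + r^2 := by
        rw [dist_sq _ x hx, hinner_e h x, hnormsmul h hh0]
      have hx2 : x 2 ≤ r * Real.sin θ := hScoord x hx
      have hkey : (r * Real.cos θ)^2 ≤ dist (h • e) x ^ 2 := by
        rw [hd2]
        nlinarith [Real.sin_sq_add_cos_sq θ, sq_nonneg (h - r * Real.sin θ),
          mul_nonneg hh0 (sub_nonneg.2 hx2)]
      exact sq_le_aux dist_nonneg hkey (by positivity)
    · -- sphere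
      rw [hKs, mem_sphere, dist_zero_right] at hq
      exact notin_cthick hε0 (by linarith : ε < ε + 1)
        (fun x hx => by have := (dist_ge_norm q x hx).2; rw [hSnorm x hx, hq] at this; linarith)
  constructor
  · exact ⟨0, hK (Or.inl h0ball)⟩
  apply isPreconnected_of_forall (0 : EuclideanSpace ℝ (Fin 3))
  intro p hp
  by_cases hpball : ‖p‖ < r - ε
  · exact ⟨K, hK, Or.inl h0ball, Or.inl (mem_ball_zero_iff.2 hpball), pK⟩
  have hs0pos : 0 < ‖p‖ := by
    have : r - ε ≤ ‖p‖ := not_lt.1 hpball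
    linarith
  set s0 := ‖p‖ with hs0_def
  set u := s0⁻¹ • p with hu_def
  have hu : ‖u‖ = 1 := by
    rw [hu_def, norm_smul, Real.norm_eq_abs, abs_of_pos (inv_pos.2 hs0pos), ← hs0_def,
      inv_mul_cancel₀ (ne_of_gt hs0pos)]
  have hpu : s0 • u = p := by
    rw [hu_def, smul_smul, mul_inv_cancel₀ (ne_of_gt hs0pos), one_smul]
  have hnorm_su : ∀ s : ℝ, 0 ≤ s → ‖s • u‖ = s := by
    intro s hs; rw [norm_smul, hu, mul_one, Real.norm_eq_abs, abs_of_nonneg hs]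
  have hd2 : ∀ (s : ℝ), 0 ≤ s → ∀ x ∈ S,
      dist (s • u) x ^ 2 = s^2 - 2 * (s * (inner ℝ u x : ℝ)) + r^2 := by
    intro s hs x hx
    rw [dist_sq _ x hx, real_inner_smul_left, hnorm_su s hs]
  by_cases hpout : r + ε < s0
  · -- far exterior: radial segment to the sphere of radius R
    set seg := (fun s : ℝ => s • u) '' Icc (min s0 R) (max s0 R) with hseg
    have hminR : r + ε < min s0 R := lt_min hpout (by rw [hR_def]; linarith)
    have hsegsub : seg ⊆ (Metric.cthickening ε S)ᶜ := by
      rintro q ⟨s, hs, rfl⟩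
      have hs1 : r + ε < s := lt_of_lt_of_le hminR hs.1
      have hs0' : (0:ℝ) ≤ s := by linarith
      refine notin_cthick hε0 (show ε < s - r by linarith) (fun x hx => ?_)
      have h3 := (dist_ge_norm (s • u) x hx).2
      rw [hSnorm x hx, hnorm_su s hs0'] at h3
      linarith
    have hpseg : p ∈ seg := ⟨s0, ⟨min_le_left _ _, le_max_left _ _⟩, hpu⟩
    have hRseg : R • u ∈ seg := ⟨R, ⟨min_le_right _ _, le_max_right _ _⟩, rfl⟩
    have hRusph : R • u ∈ Ksph := by rw [hKs, mem_sphere, dist_zero_right, hnorm_su R hR0]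
    have psg : IsPreconnected seg :=
      isPreconnected_Icc.image _ ((continuous_id.smul continuous_const).continuousOn)
    refine ⟨seg ∪ K, union_subset hsegsub hK, Or.inr (Or.inl h0ball), Or.inl hpseg, ?_⟩
    exact IsPreconnected.union (R • u) hRseg (Or.inr (Or.inr hRusph)) psg pK
  · -- middle region: dichotomy
    have hs0le : s0 ≤ r + ε := not_lt.1 hpout
    set d0 := Metric.infDist p S with hd0_def
    have hd0 : ε < d0 := by
      have h1 : ¬ (EMetric.infEdist p S ≤ ENNReal.ofReal ε) := fun h =>
        hp (Metric.mem_cthickening_iff.2 h)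
      exact (ENNReal.ofReal_lt_iff_lt_toReal hε0 (infEdist_ne_top hSne)).1 (not_le.1 h1)
    have hd0le : ∀ x ∈ S, d0 ≤ dist p x := fun x hx => Metric.infDist_le_dist_of_mem hx
    have hd00 : 0 ≤ d0 := le_trans hε0 (le_of_lt hd0)
    set ε' := min ((ε + d0)/2) ((ε + r)/2) with hep_def
    have hε'ε : ε < ε' := lt_min (by linarith) (by linarith)
    have hε'0 : 0 ≤ ε' := by linarith
    have hε'd0 : ε' < d0 := lt_of_le_of_lt (min_le_left _ _) (by linarith)
    have hε'r : ε' < r := lt_of_le_of_lt (min_le_right _ _) (by linarith)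
    set m := Real.sqrt (r^2 - ε'^2) with hm_def
    have hm2 : m^2 = r^2 - ε'^2 := Real.sq_sqrt (by nlinarith)
    have hm0 : 0 ≤ m := Real.sqrt_nonneg _
    have dich : (∀ x ∈ S, ¬(m ≤ (inner ℝ u x : ℝ) ∧ (inner ℝ u x : ℝ) ≤ s0)) ∨
        (∀ x ∈ S, ¬(s0 ≤ (inner ℝ u x : ℝ) ∧ m ≤ (inner ℝ u x : ℝ))) := by
      by_contra hc
      push_neg at hc
      obtain ⟨⟨x2, hx2S, hx2a, hx2b⟩, ⟨x3, hx3S, hx3a, hx3b⟩⟩ := hc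
      have hd : d0 ≤ dist p x3 := hd0le x3 hx3S
      have hsq := hd2 s0 (le_of_lt hs0pos) x3 hx3S
      rw [hpu] at hsq
      have hms0 : m ≤ s0 := le_trans hx2a hx2b
      exact dich_aux hms0 hx3a hx3b hm0 hm2 hsq (lt_of_lt_of_le hε'd0 hd) hε'0
    rcases dich with hA | hB
    · -- inward radial segment
      set seg := (fun s : ℝ => s • u) '' Icc (0:ℝ) s0 with hseg
      have hsegsub : seg ⊆ (Metric.cthickening ε S)ᶜ := by
        rintro q ⟨s, hs, rfl⟩
        refine notin_cthick hε0 hε'ε (fun x hx => ?_)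
        have hq2 := hd2 s hs.1 x hx
        have hdpx := hd0le x hx
        have hdpx2 := hd2 s0 (le_of_lt hs0pos) x hx
        rw [hpu] at hdpx2
        have hkey : ε'^2 ≤ dist (s • u) x ^ 2 := by
          rw [hq2]
          rcases not_and_or.1 (hA x hx) with h1 | h1
          · exact bound1 hs.1 (le_of_lt (not_le.1 h1)) hm2
          · refine bound2 ?_ hdpx (le_of_lt hε'd0) hε'0 hdpx2
            have h2 := not_le.1 h1
            nlinarith [mul_nonneg (sub_nonneg.2 hs.2)
              (show (0:ℝ) ≤ 2*(inner ℝ u x : ℝ) - s - s0 by linarith [hs.1, hs.2, h2])]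
        exact sq_le_aux dist_nonneg hkey hε'0
      have h0seg : (0 : EuclideanSpace ℝ (Fin 3)) ∈ seg :=
        ⟨0, ⟨le_refl 0, le_of_lt hs0pos⟩, zero_smul ℝ u⟩
      have hpseg : p ∈ seg := ⟨s0, ⟨le_of_lt hs0pos, le_refl s0⟩, hpu⟩
      have psg : IsPreconnected seg :=
        isPreconnected_Icc.image _ ((continuous_id.smul continuous_const).continuousOn)
      refine ⟨seg ∪ K, union_subset hsegsub hK, Or.inl h0seg, Or.inl hpseg, ?_⟩
      exact IsPreconnected.union 0 h0seg (Or.inl h0ball) psg pK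
    · -- outward radial segment
      have hs0R : s0 ≤ R := by rw [hR_def]; linarith
      set seg := (fun s : ℝ => s • u) '' Icc s0 R with hseg
      have hsegsub : seg ⊆ (Metric.cthickening ε S)ᶜ := by
        rintro q ⟨s, hs, rfl⟩
        have hs0' : (0:ℝ) ≤ s := le_trans (le_of_lt hs0pos) hs.1
        refine notin_cthick hε0 hε'ε (fun x hx => ?_)
        have hq2 := hd2 s hs0' x hx
        have hdpx := hd0le x hx
        have hdpx2 := hd2 s0 (le_of_lt hs0pos) x hx
        rw [hpu] at hdpx2
        have hkey : ε'^2 ≤ dist (s • u) x ^ 2 := by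
          rw [hq2]
          rcases not_and_or.1 (hB x hx) with h1 | h1
          · refine bound2 ?_ hdpx (le_of_lt hε'd0) hε'0 hdpx2
            have h2 := not_le.1 h1
            nlinarith [mul_nonneg (sub_nonneg.2 hs.1)
              (show (0:ℝ) ≤ s + s0 - 2*(inner ℝ u x : ℝ) by linarith [hs.1, hs.2, h2])]
          · exact bound1 hs0' (le_of_lt (not_le.1 h1)) hm2
        exact sq_le_aux dist_nonneg hkey hε'0
      have hpseg : p ∈ seg := ⟨s0, ⟨le_refl s0, hs0R⟩, hpu⟩
      have hRseg : R • u ∈ seg := ⟨R, ⟨hs0R, le_refl R⟩, rfl⟩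
      have hRusph : R • u ∈ Ksph := by rw [hKs, mem_sphere, dist_zero_right, hnorm_su R hR0]
      have psg : IsPreconnected seg :=
        isPreconnected_Icc.image _ ((continuous_id.smul continuous_const).continuousOn)
      refine ⟨seg ∪ K, union_subset hsegsub hK, Or.inr (Or.inl h0ball), Or.inl hpseg, ?_⟩
      exact IsPreconnected.union (R • u) hRseg (Or.inr (Or.inr hRusph)) psg pK
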